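/- Let p ∈ [0,1] and C > 0, and let Φ : ℝ → ℝ be twice continuously differentiable with Φ(0) = 0, Φ'(0) = 0, |Φ''(x)| ≤ C for all x, and |Φ(x) − Φ(y)| ≤ C|x−y|^p for all x, y. Then there exists a constant C' > 0 such that for all x, y ∈ ℝ: (i) |Φ(x) − Φ(y)| ≤ C' ( (1 ∧ |x| + 1 ∧ |y|) |x−y| 1_{{|x−y| ≤ 1}} + |x−y|^p 1_{{|x−y| > 1}} ); (ii) |Φ(x)| ≤ C' (|x|^p ∧ x²). -/

import Mathlib

/-- estimates (5.33)–(5.34) of the paper: if `Φ` is `C²` with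
`Φ(0) = 0`, `Φ'(0) = 0`, `|Φ''| ≤ C` and `|Φ(x) − Φ(y)| ≤ C|x−y|^p`, `p ∈ [0,1]`, then
there is `C' > 0` such that for all `x, y`:
(i) `|Φ(x) − Φ(y)| ≤ C' ((1 ∧ |x| + 1 ∧ |y|)|x−y| 1_{|x−y|≤1} + |x−y|^p 1_{|x−y|>1})`;
(ii) `|Φ(x)| ≤ C' (|x|^p ∧ x²)`. -/
theorem statement8
    {p C : ℝ} (hp0 : 0 ≤ p) (hp1 : p ≤ 1) (hC : 0 < C)
    (Φ : ℝ → ℝ) (hΦ : ContDiff ℝ 2 Φ)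
    (h0 : Φ 0 = 0) (h0' : deriv Φ 0 = 0)
    (hd2 : ∀ x : ℝ, |deriv (deriv Φ) x| ≤ C)
    (hH : ∀ x y : ℝ, |Φ x - Φ y| ≤ C * |x - y| ^ p) :
    ∃ C' > (0 : ℝ), ∀ x y : ℝ,
      (|Φ x - Φ y| ≤ C' * ((min 1 |x| + min 1 |y|) * |x - y| *
            (if |x - y| ≤ 1 then (1 : ℝ) else 0) +
          |x - y| ^ p * (if 1 < |x - y| then (1 : ℝ) else 0))) ∧
      |Φ x| ≤ C' * min (|x| ^ p) (x ^ 2) := by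
  have hΦd : Differentiable ℝ Φ := hΦ.differentiable (by norm_num)
  have hΦ2 : ContDiff ℝ 1 (deriv Φ) := by
    have := (contDiff_succ_iff_deriv (n := 1)).mp (by exact_mod_cast hΦ)
    exact this.2.2
  have hdd : Differentiable ℝ (deriv Φ) := hΦ2.differentiable (by norm_num)
  -- |Φ'(t) - Φ'(s)| ≤ C |t - s|
  have hlip : ∀ s t : ℝ, |deriv Φ t - deriv Φ s| ≤ C * |t - s| := by
    intro s t
    have := convex_univ.norm_image_sub_le_of_norm_deriv_le (f := deriv Φ)
      (fun u _ => hdd u) (fun u _ => hd2 u)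
      (Set.mem_univ s) (Set.mem_univ t)
    simpa [Real.norm_eq_abs] using this
  have hlin : ∀ t : ℝ, |deriv Φ t| ≤ C * |t| := by
    intro t; simpa [h0'] using hlip 0 t
  -- global bound on deriv
  have hbdd : ∀ x : ℝ, |deriv Φ x| ≤ 2 * C := by
    intro x
    have key : |(Φ (x+1) - deriv Φ x * (x+1)) - (Φ x - deriv Φ x * x)| ≤ C * 1 := by
      have := (convex_Icc x (x+1)).norm_image_sub_le_of_norm_hasDerivWithin_le
        (f := fun t => Φ t - deriv Φ x * t) (f' := fun t => deriv Φ t - deriv Φ x)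
        (C := C) (fun u _ => by
          have hg : HasDerivAt (fun t => Φ t - deriv Φ x * t) (deriv Φ u - deriv Φ x) u := by
            have h := (hΦd u).hasDerivAt.sub ((hasDerivAt_id u).const_mul (deriv Φ x))
            simp only [id_eq, mul_one] at h
            exact h
          exact hg.hasDerivWithinAt)
        (fun u hu => by
          simp only [Set.mem_Icc] at hu
          have := hlip x u
          have h1 : |u - x| ≤ 1 := by rw [abs_le]; constructor <;> linarith
          calc ‖deriv Φ u - deriv Φ x‖ ≤ C * |u - x| := by
                simpa [Real.norm_eq_abs] using hlip x u
            _ ≤ C := by nlinarith)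
        (x := x) (y := x + 1) (Set.left_mem_Icc.mpr (by linarith))
        (Set.right_mem_Icc.mpr (by linarith))
      simpa [Real.norm_eq_abs] using this
    have hH1 : |Φ (x+1) - Φ x| ≤ C := by
      have := hH (x+1) x
      simpa using this
    have : |deriv Φ x| ≤ |Φ (x+1) - Φ x| + C := by
      have e : deriv Φ x = (Φ (x+1) - Φ x) - ((Φ (x+1) - deriv Φ x * (x+1)) - (Φ x - deriv Φ x * x)) := by ring
      rw [e]
      calc _ ≤ |Φ (x+1) - Φ x| + |(Φ (x+1) - deriv Φ x * (x+1)) - (Φ x - deriv Φ x * x)| := abs_sub _ _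
        _ ≤ _ := by linarith [key]
    linarith
  -- deriv bound with min
  have hmin : ∀ t : ℝ, |deriv Φ t| ≤ 2 * C * min 1 |t| := by
    intro t
    rcases le_total (|t|) 1 with h | h
    · rw [min_eq_right h]
      have := hlin t
      nlinarith [abs_nonneg (deriv Φ t), abs_nonneg t]
    · rw [min_eq_left h]; simpa using hbdd t
  refine ⟨2 * C, by linarith, fun x y => ?_⟩
  constructor
  · rcases le_or_gt (|x - y|) 1 with hle | hgt
    · rw [if_pos hle, if_neg (not_lt.mpr hle)]
      have hM : ∀ t ∈ Set.uIcc x y, |deriv Φ t| ≤ 2 * C * (min 1 |x| + min 1 |y|) := by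
        intro t ht
        have habs : |t| ≤ max |x| |y| := by
          rcases le_total x y with h | h
          · rw [Set.uIcc_of_le h] at ht
            exact abs_le_max_abs_abs ht.1 ht.2
          · rw [Set.uIcc_of_ge h] at ht
            exact (abs_le_max_abs_abs ht.1 ht.2).trans (by rw [max_comm])
        have h1 : min 1 |t| ≤ min 1 |x| + min 1 |y| := by
          rcases max_cases (|x|) (|y|) with ⟨he, _⟩ | ⟨he, _⟩
          · have : min 1 |t| ≤ min 1 |x| := min_le_min le_rfl (he ▸ habs)
            have h2 : (0:ℝ) ≤ min 1 |y| := le_min zero_le_one (abs_nonneg _)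
            linarith
          · have : min 1 |t| ≤ min 1 |y| := min_le_min le_rfl (he ▸ habs)
            have h2 : (0:ℝ) ≤ min 1 |x| := le_min zero_le_one (abs_nonneg _)
            linarith
        calc |deriv Φ t| ≤ 2 * C * min 1 |t| := hmin t
          _ ≤ 2 * C * (min 1 |x| + min 1 |y|) := by nlinarith
      have := (convex_uIcc x y).norm_image_sub_le_of_norm_deriv_le
        (fun u _ => hΦd u) (fun u hu => by simpa [Real.norm_eq_abs] using hM u hu)
        Set.right_mem_uIcc Set.left_mem_uIcc
      simp only [Real.norm_eq_abs] at this
      calc |Φ x - Φ y| ≤ 2 * C * (min 1 |x| + min 1 |y|) * |x - y| := this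
        _ = 2 * C * ((min 1 |x| + min 1 |y|) * |x - y| * 1 + |x - y| ^ p * 0) := by ring
    · rw [if_neg (not_le.mpr hgt), if_pos hgt]
      calc |Φ x - Φ y| ≤ C * |x - y| ^ p := hH x y
        _ ≤ 2 * C * ((min 1 |x| + min 1 |y|) * |x - y| * 0 + |x - y| ^ p * 1) := by
            nlinarith [Real.rpow_nonneg (abs_nonneg (x - y)) p]
  · have h1 : |Φ x| ≤ C * |x| ^ p := by simpa [h0] using hH x 0
    have h2 : |Φ x| ≤ C * x ^ 2 := by
      have hM : ∀ t ∈ Set.uIcc 0 x, |deriv Φ t| ≤ C * |x| := by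
        intro t ht
        have habs : |t| ≤ |x| := by
          rcases le_total (0:ℝ) x with h | h
          · rw [Set.uIcc_of_le h] at ht
            rw [abs_le]; constructor
            · linarith [ht.1, abs_nonneg x]
            · exact ht.2.trans (le_abs_self x)
          · rw [Set.uIcc_of_ge h] at ht
            rw [abs_le]; constructor
            · calc -|x| ≤ x := neg_abs_le x
                _ ≤ t := ht.1
            · linarith [ht.2, abs_nonneg x]
        calc |deriv Φ t| ≤ C * |t| := hlin t
          _ ≤ C * |x| := by nlinarith
      have := (convex_uIcc 0 x).norm_image_sub_le_of_norm_deriv_le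
        (fun u _ => hΦd u) (fun u hu => by simpa [Real.norm_eq_abs] using hM u hu)
        Set.right_mem_uIcc Set.left_mem_uIcc
      simp only [Real.norm_eq_abs, h0, zero_sub, abs_neg, sub_zero] at this
      calc |Φ x| ≤ C * |x| * |x| := this
        _ = C * x ^ 2 := by rw [← sq_abs x]; ring
    rcases min_cases (|x| ^ p) (x ^ 2) with ⟨he, _⟩ | ⟨he, _⟩
    · rw [he]; nlinarith [Real.rpow_nonneg (abs_nonneg x) p]
    · rw [he]; nlinarith [sq_nonneg x]
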